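/- Let X be a metric space, let p_s, p_{s'}, p★ be probability measures on X with finite second moments, and let L_s, L_{s'} : X → ℝ be Lipschitz functions with Lipschitz constants ℓ_s, ℓ_{s'} respectively, integrable with respect to these measures. Suppose |L_s(z) − L_{s'}(z)| ≤ K for p★-almost every z ∈ X. Then |∫ L_s dp_s − ∫ L_{s'} dp_{s'}| ≤ ℓ_s · W₂(p_s, p★) + ℓ_{s'} · W₂(p_{s'}, p★) + K. -/

import Mathlib

open MeasureTheory
open scoped ENNReal NNReal

/-- The 2-Wasserstein distance between two measures, as an extended nonnegative real:
the infimum over couplings of the integral of the squared distance, to the power 1/2. -/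
noncomputable def W2 {X : Type*} [MeasurableSpace X] [PseudoEMetricSpace X]
    (p q : Measure X) : ℝ≥0∞ :=
  (⨅ γ ∈ {γ : Measure (X × X) | γ.map Prod.fst = p ∧ γ.map Prod.snd = q},
    ∫⁻ z, edist z.1 z.2 ^ 2 ∂γ) ^ (1 / 2 : ℝ)

/-- A measure on a metric space has finite second moments. -/
def FiniteSecondMoment {X : Type*} [MeasurableSpace X] [PseudoEMetricSpace X]
    (p : Measure X) : Prop :=
  ∀ x₀ : X, ∫⁻ x, edist x x₀ ^ 2 ∂p ≠ ∞

/-- Cauchy–Schwarz for the lower Lebesgue integral over a probability measure;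
no measurability hypothesis is needed. -/
lemma W2aux.lintegral_le_rpow_half_lintegral_sq {α : Type*} [MeasurableSpace α]
    (μ : Measure α) [IsProbabilityMeasure μ] (f : α → ℝ≥0∞) :
    ∫⁻ a, f a ∂μ ≤ (∫⁻ a, f a ^ 2 ∂μ) ^ (1 / 2 : ℝ) := by
  obtain ⟨g, hgm, hgle, hg⟩ := exists_measurable_le_lintegral_eq μ f
  rw [hg]
  have h2 : ∀ x : ℝ≥0∞, x ^ (2 : ℝ) = x ^ (2 : ℕ) := fun x => by
    rw [← ENNReal.rpow_natCast]; norm_num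
  have hCS := ENNReal.lintegral_mul_le_Lp_mul_Lq μ
    (Real.HolderConjugate.two_two : Real.HolderConjugate 2 2)
    hgm.aemeasurable (aemeasurable_const (b := (1 : ℝ≥0∞)))
  simp only [Pi.mul_apply, mul_one, ENNReal.one_rpow, lintegral_const,
    measure_univ, one_mul, h2, one_pow] at hCS
  refine hCS.trans (ENNReal.rpow_le_rpow (lintegral_mono fun a => ?_) (by norm_num))
  exact pow_le_pow_left' (hgle a) 2

/-- Bound for the difference of integrals of a Lipschitz function via one coupling. -/
lemma W2aux.coupling_bound {X : Type*} [MetricSpace X] [MeasurableSpace X] [BorelSpace X]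
    (p q : Measure X) [IsProbabilityMeasure p] [IsProbabilityMeasure q]
    (L : X → ℝ) (ℓ : ℝ≥0) (hL : LipschitzWith ℓ L)
    (h1 : Integrable L p) (h2 : Integrable L q)
    (γ : Measure (X × X)) (hγ1 : γ.map Prod.fst = p) (hγ2 : γ.map Prod.snd = q) :
    ENNReal.ofReal |∫ z, L z ∂p - ∫ z, L z ∂q| ≤
      (ℓ : ℝ≥0∞) * (∫⁻ z, edist z.1 z.2 ^ 2 ∂γ) ^ (1 / 2 : ℝ) := by
  have hprob : IsProbabilityMeasure γ := by
    constructor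
    have : γ.map Prod.fst Set.univ = 1 := by rw [hγ1]; exact measure_univ
    rwa [Measure.map_apply measurable_fst MeasurableSet.univ, Set.preimage_univ] at this
  have hf1 : Integrable (fun z : X × X => L z.1) γ := by
    rw [← hγ1] at h1
    exact (integrable_map_measure hL.continuous.aestronglyMeasurable
      measurable_fst.aemeasurable).mp h1
  have hf2 : Integrable (fun z : X × X => L z.2) γ := by
    rw [← hγ2] at h2
    exact (integrable_map_measure hL.continuous.aestronglyMeasurable
      measurable_snd.aemeasurable).mp h2
  have e1 : ∫ z, L z ∂p = ∫ z, L z.1 ∂γ := by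
    rw [← hγ1, integral_map measurable_fst.aemeasurable hL.continuous.aestronglyMeasurable]
  have e2 : ∫ z, L z ∂q = ∫ z, L z.2 ∂γ := by
    rw [← hγ2, integral_map measurable_snd.aemeasurable hL.continuous.aestronglyMeasurable]
  rw [e1, e2, ← integral_sub hf1 hf2]
  calc ENNReal.ofReal |∫ z, (L z.1 - L z.2) ∂γ|
      ≤ ENNReal.ofReal (∫ z, |L z.1 - L z.2| ∂γ) := by
        apply ENNReal.ofReal_le_ofReal
        simpa using norm_integral_le_integral_norm (fun z : X × X => L z.1 - L z.2)
    _ = ∫⁻ z, ENNReal.ofReal |L z.1 - L z.2| ∂γ :=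
        ofReal_integral_eq_lintegral_ofReal (hf1.sub hf2).abs
          (Filter.Eventually.of_forall fun z => abs_nonneg _)
    _ ≤ ∫⁻ z, (ℓ : ℝ≥0∞) * edist z.1 z.2 ∂γ := by
        apply lintegral_mono
        intro z
        dsimp only
        have hd : ENNReal.ofReal |L z.1 - L z.2| = edist (L z.1) (L z.2) := by
          rw [edist_dist, Real.dist_eq]
        rw [hd]
        exact hL z.1 z.2
    _ = (ℓ : ℝ≥0∞) * ∫⁻ z, edist z.1 z.2 ∂γ := lintegral_const_mul' _ _ ENNReal.coe_ne_top
    _ ≤ (ℓ : ℝ≥0∞) * (∫⁻ z, edist z.1 z.2 ^ 2 ∂γ) ^ (1 / 2 : ℝ) := by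
        gcongr
        exact W2aux.lintegral_le_rpow_half_lintegral_sq γ _

/-- The infimum over couplings of the integral of the squared distance is finite when both
measures have finite second moments. -/
lemma W2aux.iInf_ne_top {X : Type*} [MetricSpace X] [MeasurableSpace X] [BorelSpace X]
    (p q : Measure X) [IsProbabilityMeasure p] [IsProbabilityMeasure q]
    (hp : FiniteSecondMoment p) (hq : FiniteSecondMoment q) :
    (⨅ γ ∈ {γ : Measure (X × X) | γ.map Prod.fst = p ∧ γ.map Prod.snd = q},
      ∫⁻ z, edist z.1 z.2 ^ 2 ∂γ) ≠ ∞ := by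
  have hX : Nonempty X := by
    by_contra h
    rw [not_nonempty_iff] at h
    have : p Set.univ = 1 := measure_univ
    simp [Set.univ_eq_empty_iff.mpr h] at this
  obtain ⟨x₀⟩ := hX
  have hmem : p.prod q ∈ {γ : Measure (X × X) | γ.map Prod.fst = p ∧ γ.map Prod.snd = q} := by
    constructor <;> simp [Measure.map_fst_prod, Measure.map_snd_prod, measure_univ]
  have hfin : ∫⁻ z, edist z.1 z.2 ^ 2 ∂(p.prod q) ≠ ∞ := by
    have hb : ∀ z : X × X, edist z.1 z.2 ^ 2 ≤ 4 * (edist z.1 x₀ ^ 2 + edist z.2 x₀ ^ 2) := by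
      intro z
      have h1 : edist z.1 z.2 ≤ edist z.1 x₀ + edist z.2 x₀ := by
        rw [show edist z.2 x₀ = edist x₀ z.2 from edist_comm _ _]
        exact edist_triangle _ _ _
      calc edist z.1 z.2 ^ 2 ≤ (edist z.1 x₀ + edist z.2 x₀) ^ 2 := pow_le_pow_left' h1 2
        _ ≤ (2 * max (edist z.1 x₀) (edist z.2 x₀)) ^ 2 := by
            apply pow_le_pow_left'
            rw [two_mul]
            exact add_le_add (le_max_left _ _) (le_max_right _ _)
        _ = 4 * max (edist z.1 x₀) (edist z.2 x₀) ^ 2 := by ring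
        _ ≤ 4 * (edist z.1 x₀ ^ 2 + edist z.2 x₀ ^ 2) := by
            gcongr
            rcases le_total (edist z.1 x₀) (edist z.2 x₀) with h | h
            · rw [max_eq_right h]; exact le_add_self
            · rw [max_eq_left h]; exact le_self_add
    have hmeas : Measurable (fun x : X => edist x x₀ ^ 2) :=
      ((continuous_id.edist continuous_const).measurable).pow_const 2
    have key : ∫⁻ z, edist z.1 z.2 ^ 2 ∂(p.prod q) ≤
        4 * ((∫⁻ x, edist x x₀ ^ 2 ∂p) + ∫⁻ x, edist x x₀ ^ 2 ∂q) := by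
      calc ∫⁻ z, edist z.1 z.2 ^ 2 ∂(p.prod q)
          ≤ ∫⁻ z : X × X, 4 * (edist z.1 x₀ ^ 2 + edist z.2 x₀ ^ 2) ∂(p.prod q) :=
            lintegral_mono hb
        _ = 4 * ((∫⁻ z : X × X, edist z.1 x₀ ^ 2 ∂(p.prod q)) +
              ∫⁻ z : X × X, edist z.2 x₀ ^ 2 ∂(p.prod q)) := by
            rw [lintegral_const_mul' _ _ (by norm_num),
              lintegral_add_left (f := fun z : X × X => edist z.1 x₀ ^ 2) (hmeas.comp measurable_fst)]
        _ = 4 * ((∫⁻ x, edist x x₀ ^ 2 ∂p) + ∫⁻ x, edist x x₀ ^ 2 ∂q) := by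
            congr 1
            have l1 : ∫⁻ z : X × X, edist z.1 x₀ ^ 2 ∂(p.prod q) = ∫⁻ x, edist x x₀ ^ 2 ∂p := by
              rw [← lintegral_map hmeas measurable_fst]
              congr 1
              simp [Measure.map_fst_prod, measure_univ]
            have l2 : ∫⁻ z : X × X, edist z.2 x₀ ^ 2 ∂(p.prod q) = ∫⁻ x, edist x x₀ ^ 2 ∂q := by
              rw [← lintegral_map hmeas measurable_snd]
              congr 1
              simp [Measure.map_snd_prod, measure_univ]
            rw [l1, l2]
    exact (key.trans_lt (by
      have := hp x₀
      have := hq x₀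
      exact ENNReal.mul_lt_top (by norm_num)
        (ENNReal.add_lt_top.mpr ⟨lt_top_iff_ne_top.mpr ‹_›, lt_top_iff_ne_top.mpr ‹_›⟩))).ne
  exact ne_top_of_le_ne_top hfin (iInf₂_le _ hmem)

/-- The key single-measure estimate: the difference of integrals of an `ℓ`-Lipschitz
function is bounded by `ℓ` times the 2-Wasserstein distance. -/
lemma W2aux.abs_integral_sub_le {X : Type*} [MetricSpace X] [MeasurableSpace X] [BorelSpace X]
    (p q : Measure X) [IsProbabilityMeasure p] [IsProbabilityMeasure q]
    (hp : FiniteSecondMoment p) (hq : FiniteSecondMoment q)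
    (L : X → ℝ) (ℓ : ℝ≥0) (hL : LipschitzWith ℓ L)
    (h1 : Integrable L p) (h2 : Integrable L q) :
    |∫ z, L z ∂p - ∫ z, L z ∂q| ≤ (ℓ : ℝ) * (W2 p q).toReal := by
  set S := {γ : Measure (X × X) | γ.map Prod.fst = p ∧ γ.map Prod.snd = q} with hS
  set A := ⨅ γ ∈ S, ∫⁻ z, edist z.1 z.2 ^ 2 ∂γ with hA
  have hAne : A ≠ ∞ := W2aux.iInf_ne_top p q hp hq
  have hW2 : W2 p q = A ^ (1 / 2 : ℝ) := rfl
  have hkey : ENNReal.ofReal |∫ z, L z ∂p - ∫ z, L z ∂q| ≤ (ℓ : ℝ≥0∞) * A ^ (1 / 2 : ℝ) := by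
    rcases eq_or_ne ℓ 0 with rfl | hℓ
    · -- with ℓ = 0 any single coupling gives the bound 0
      have hmem : p.prod q ∈ S := by
        constructor <;> simp [Measure.map_fst_prod, Measure.map_snd_prod, measure_univ]
      have hb := W2aux.coupling_bound p q L 0 hL h1 h2 (p.prod q) hmem.1 hmem.2
      simp only [ENNReal.coe_zero, zero_mul, nonpos_iff_eq_zero] at hb ⊢
      exact hb
    · -- square the coupling bound and take the infimum
      set x := ENNReal.ofReal |∫ z, L z ∂p - ∫ z, L z ∂q| with hx
      set c := (ℓ : ℝ≥0∞) ^ 2 with hc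
      have hc0 : c ≠ 0 := by
        simp [hc, hℓ]
      have hct : c ≠ ∞ := by
        simp [hc]
      have hdiv : x ^ 2 / c ≤ A := by
        refine le_iInf₂ fun γ hγ => ?_
        have hb := W2aux.coupling_bound p q L ℓ hL h1 h2 γ hγ.1 hγ.2
        have hsq : x ^ 2 ≤ c * ∫⁻ z, edist z.1 z.2 ^ 2 ∂γ := by
          have h2 := pow_le_pow_left' hb 2
          refine h2.trans (le_of_eq ?_)
          rw [mul_pow, hc]
          congr 1
          rw [← ENNReal.rpow_natCast ((∫⁻ z, edist z.1 z.2 ^ 2 ∂γ) ^ (1 / 2 : ℝ)) 2,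
            ← ENNReal.rpow_mul]
          norm_num
        rw [ENNReal.div_le_iff_le_mul (Or.inl hc0) (Or.inl hct), mul_comm]
        exact hsq
      have hsqA : x ^ 2 ≤ c * A := by
        calc x ^ 2 = x ^ 2 / c * c := (ENNReal.div_mul_cancel hc0 hct).symm
          _ ≤ A * c := mul_le_mul_left hdiv c
          _ = c * A := mul_comm _ _
      calc x = (x ^ 2) ^ (1 / 2 : ℝ) := by
            rw [← ENNReal.rpow_natCast x 2, ← ENNReal.rpow_mul]
            norm_num
        _ ≤ (c * A) ^ (1 / 2 : ℝ) := ENNReal.rpow_le_rpow hsqA (by norm_num)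
        _ = c ^ (1 / 2 : ℝ) * A ^ (1 / 2 : ℝ) :=
            ENNReal.mul_rpow_of_nonneg _ _ (by norm_num)
        _ = (ℓ : ℝ≥0∞) * A ^ (1 / 2 : ℝ) := by
            congr 1
            rw [hc, ← ENNReal.rpow_natCast (ℓ : ℝ≥0∞) 2, ← ENNReal.rpow_mul]
            norm_num
  -- convert the ENNReal inequality to the real one
  have hfin : (ℓ : ℝ≥0∞) * A ^ (1 / 2 : ℝ) ≠ ∞ :=
    ENNReal.mul_ne_top ENNReal.coe_ne_top (ENNReal.rpow_ne_top_of_nonneg (by norm_num) hAne)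
  have := ENNReal.toReal_mono hfin hkey
  rw [ENNReal.toReal_ofReal (abs_nonneg _), ENNReal.toReal_mul] at this
  rw [hW2]
  simpa using this

/-- Wasserstein group fairness disparity bound: for probability measures
`ps, ps', pstar` with finite second moments on a metric space, Lipschitz losses `Ls, Ls'`
with constants `ℓs, ℓs'` integrable w.r.t. these measures, and `|Ls z − Ls' z| ≤ K` for
`pstar`-a.e. `z`, we have
`|∫ Ls dps − ∫ Ls' dps'| ≤ ℓs · W₂(ps, pstar) + ℓs' · W₂(ps', pstar) + K`. -/
theorem wasserstein_group_disparity_bound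
    {X : Type*} [MetricSpace X] [MeasurableSpace X] [BorelSpace X]
    (ps ps' pstar : Measure X)
    [IsProbabilityMeasure ps] [IsProbabilityMeasure ps'] [IsProbabilityMeasure pstar]
    (hps : FiniteSecondMoment ps) (hps' : FiniteSecondMoment ps')
    (hpstar : FiniteSecondMoment pstar)
    (Ls Ls' : X → ℝ) (ℓs ℓs' : ℝ≥0)
    (hLs : LipschitzWith ℓs Ls) (hLs' : LipschitzWith ℓs' Ls')
    (hint1 : Integrable Ls ps) (hint2 : Integrable Ls' ps')
    (hint3 : Integrable Ls pstar) (hint4 : Integrable Ls' pstar)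
    (K : ℝ) (hK : ∀ᵐ z ∂pstar, |Ls z - Ls' z| ≤ K) :
    |∫ z, Ls z ∂ps - ∫ z, Ls' z ∂ps'| ≤
      (ℓs : ℝ) * (W2 ps pstar).toReal + (ℓs' : ℝ) * (W2 ps' pstar).toReal + K := by
  have t1 : |∫ z, Ls z ∂ps - ∫ z, Ls z ∂pstar| ≤ (ℓs : ℝ) * (W2 ps pstar).toReal :=
    W2aux.abs_integral_sub_le ps pstar hps hpstar Ls ℓs hLs hint1 hint3
  have t3 : |∫ z, Ls' z ∂ps' - ∫ z, Ls' z ∂pstar| ≤ (ℓs' : ℝ) * (W2 ps' pstar).toReal :=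
    W2aux.abs_integral_sub_le ps' pstar hps' hpstar Ls' ℓs' hLs' hint2 hint4
  have t2 : |∫ z, Ls z ∂pstar - ∫ z, Ls' z ∂pstar| ≤ K := by
    rw [← integral_sub hint3 hint4]
    calc |∫ z, (Ls z - Ls' z) ∂pstar| ≤ ∫ z, |Ls z - Ls' z| ∂pstar := by
          simpa using norm_integral_le_integral_norm (fun z => Ls z - Ls' z)
      _ ≤ ∫ _, K ∂pstar := integral_mono_ae (hint3.sub hint4).abs (integrable_const K) hK
      _ = K := by simp
  calc |∫ z, Ls z ∂ps - ∫ z, Ls' z ∂ps'|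
      ≤ |∫ z, Ls z ∂ps - ∫ z, Ls z ∂pstar| + |∫ z, Ls z ∂pstar - ∫ z, Ls' z ∂pstar| +
        |∫ z, Ls' z ∂pstar - ∫ z, Ls' z ∂ps'| := by
        have := abs_sub_le (∫ z, Ls z ∂ps) (∫ z, Ls' z ∂pstar) (∫ z, Ls' z ∂ps')
        have h2 := abs_sub_le (∫ z, Ls z ∂ps) (∫ z, Ls z ∂pstar) (∫ z, Ls' z ∂pstar)
        linarith
    _ ≤ (ℓs : ℝ) * (W2 ps pstar).toReal + K + (ℓs' : ℝ) * (W2 ps' pstar).toReal := by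
        rw [abs_sub_comm (∫ z, Ls' z ∂pstar)]
        gcongr
    _ = (ℓs : ℝ) * (W2 ps pstar).toReal + (ℓs' : ℝ) * (W2 ps' pstar).toReal + K := by ring
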